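/- Let β > 0, t > 0, ν a positive integer, and write the t-density f(u) = c_ν β (1 + β²u²/ν)^{−(ν+1)/2} with c_ν = Γ((ν+1)/2)/(√(πν) Γ(ν/2)). For w_1 = w_2 = w > 0, ∫_{−∞}^{∞} max( f(u)/w , f(u−t)/w ) du = (2/w) F_ν(βt/2), where F_ν is the CDF of the Student t-distribution with ν degrees of freedom. -/

import Mathlib

open MeasureTheory

private lemma aux_integrable (a : ℝ) (ha : 0 < a) (p : ℝ) (hp : p ≤ -1) :
    Integrable (fun s : ℝ => (1 + s ^ 2 / a) ^ p) := by
  have hb : ∀ s : ℝ, 0 < 1 + s ^ 2 / a := fun s => by positivity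
  have hcont : Continuous fun s : ℝ => (1 + s ^ 2 / a) ^ p := by
    apply Continuous.rpow_const (by continuity)
    exact fun s => Or.inl (hb s).ne'
  set M : ℝ := max a 1 with hM
  have hM0 : (0:ℝ) < M := lt_of_lt_of_le zero_lt_one (le_max_right a 1)
  refine Integrable.mono' ((integrable_inv_one_add_sq).const_mul M)
    hcont.aestronglyMeasurable (Filter.Eventually.of_forall fun s => ?_)
  have h1 : (0:ℝ) < 1 + s ^ 2 := by positivity
  rw [Real.norm_eq_abs, abs_of_nonneg (Real.rpow_nonneg (hb s).le p)]
  have step1 : (1 + s ^ 2 / a) ^ p ≤ (1 + s ^ 2 / a) ^ (-1 : ℝ) := by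
    apply Real.rpow_le_rpow_of_exponent_le _ hp
    nlinarith [div_nonneg (sq_nonneg s) ha.le]
  refine step1.trans ?_
  rw [Real.rpow_neg_one]
  have hMa : a ≤ M := le_max_left a 1
  have hM1 : (1:ℝ) ≤ M := le_max_right a 1
  have key : 1 + s ^ 2 ≤ M * (1 + s ^ 2 / a) := by
    have h2 : s ^ 2 ≤ M * (s ^ 2 / a) := by
      rw [mul_div_assoc', le_div_iff₀ ha]
      nlinarith [sq_nonneg s]
    nlinarith
  have h4 : (1 + s ^ 2) / M ≤ 1 + s ^ 2 / a := by
    rw [div_le_iff₀ hM0]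
    nlinarith [key]
  calc (1 + s ^ 2 / a)⁻¹ ≤ ((1 + s ^ 2) / M)⁻¹ := by
        apply inv_anti₀ (by positivity) h4
    _ = M * (1 + s ^ 2)⁻¹ := by rw [inv_div, div_eq_mul_inv]

private lemma integral_Iic_comp_sub (f : ℝ → ℝ) (a b : ℝ) :
    ∫ x in Set.Iic a, f (x - b) = ∫ x in Set.Iic (a - b), f x := by
  have A : MeasurableEmbedding (fun x : ℝ => x - b) :=
    (Homeomorph.subRight b).isClosedEmbedding.measurableEmbedding
  have h := A.setIntegral_map (μ := volume) f (Set.Iic (a - b))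
  rw [show Measure.map (fun x : ℝ => x - b) volume = volume by
      simpa [sub_eq_add_neg] using map_add_right_eq_self (volume : Measure ℝ) (-b)] at h
  rw [Set.preimage_sub_const_Iic, sub_add_cancel] at h
  exact h.symm

/-- The exponent measure for the one-dimensional t-model on the diagonal `w₁ = w₂ = w`. -/
theorem t_model_diagonal (β t w : ℝ) (hβ : 0 < β) (ht : 0 < t) (hw : 0 < w)
    (ν : ℕ) (hν : 1 ≤ ν) :
    (fun (c : ℝ) (f : ℝ → ℝ) (F : ℝ → ℝ) =>
        ∫ u, max (f u / w) (f (u - t) / w) = (2 / w) * F (β * t / 2))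
      (Real.Gamma (((ν : ℝ) + 1) / 2) /
        (Real.sqrt (Real.pi * ν) * Real.Gamma ((ν : ℝ) / 2)))
      (fun u : ℝ =>
        (Real.Gamma (((ν : ℝ) + 1) / 2) /
            (Real.sqrt (Real.pi * ν) * Real.Gamma ((ν : ℝ) / 2))) * β *
          (1 + β ^ 2 * u ^ 2 / (ν : ℝ)) ^ (-((ν : ℝ) + 1) / 2))
      (fun x : ℝ =>
        (Real.Gamma (((ν : ℝ) + 1) / 2) /
            (Real.sqrt (Real.pi * ν) * Real.Gamma ((ν : ℝ) / 2))) *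
          ∫ s in Set.Iic x, (1 + s ^ 2 / (ν : ℝ)) ^ (-((ν : ℝ) + 1) / 2)) := by
  have hν0 : (0:ℝ) < ν := by exact_mod_cast Nat.lt_of_lt_of_le Nat.zero_lt_one hν
  beta_reduce
  set c : ℝ := Real.Gamma (((ν : ℝ) + 1) / 2) /
      (Real.sqrt (Real.pi * ν) * Real.Gamma ((ν : ℝ) / 2)) with hc_def
  set p : ℝ := -((ν : ℝ) + 1) / 2 with hp_def
  have hp : p ≤ -1 := by
    rw [hp_def]
    have : (1:ℝ) ≤ ν := by exact_mod_cast hν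
    linarith
  set h : ℝ → ℝ := fun s => (1 + s ^ 2 / (ν : ℝ)) ^ p with hh_def
  have hc : 0 < c := by
    rw [hc_def]
    have h1 : 0 < Real.Gamma (((ν : ℝ) + 1) / 2) := Real.Gamma_pos_of_pos (by positivity)
    have h2 : 0 < Real.Gamma ((ν : ℝ) / 2) := Real.Gamma_pos_of_pos (by positivity)
    have h3 : 0 < Real.sqrt (Real.pi * ν) := Real.sqrt_pos.mpr (by positivity)
    positivity
  have hh_int : Integrable h := aux_integrable ν hν0 p hp
  have hfh : ∀ u : ℝ, (1 + β ^ 2 * u ^ 2 / (ν : ℝ)) ^ p = h (β * u) := by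
    intro u; rw [hh_def]; congr 2; ring
  have hint1 : Integrable (fun u : ℝ => c * β * h (β * u)) :=
    ((hh_int.comp_mul_left' hβ.ne').const_mul (c * β))
  have hint2 : Integrable (fun u : ℝ => c * β * h (β * (u - t))) :=
    hint1.comp_sub_right t
  have h_mono : ∀ x y : ℝ, x ^ 2 ≤ y ^ 2 → h y ≤ h x := by
    intro x y hxy
    rw [hh_def]
    apply Real.rpow_le_rpow_of_nonpos (by positivity) _ (by rw [hp_def]; linarith)
    gcongr
  -- rewrite the integrand
  have hrw : ∀ u : ℝ,
      max (c * β * (1 + β ^ 2 * u ^ 2 / (ν : ℝ)) ^ p / w)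
          (c * β * (1 + β ^ 2 * (u - t) ^ 2 / (ν : ℝ)) ^ p / w)
        = max (c * β * h (β * u)) (c * β * h (β * (u - t))) / w := by
    intro u
    rw [max_div_div_right hw.le, hfh u, hfh (u - t)]
  simp only [hrw]
  rw [integral_div]
  -- main computation without the w
  have hmax : Integrable (fun u : ℝ => max (c * β * h (β * u)) (c * β * h (β * (u - t)))) := by
    have := hint1.sup hint2
    simpa [Pi.sup_def] using this
  have hsplit :
      (∫ u in Set.Iic (t / 2), max (c * β * h (β * u)) (c * β * h (β * (u - t))))
        + (∫ u in Set.Ioi (t / 2), max (c * β * h (β * u)) (c * β * h (β * (u - t))))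
        = ∫ u, max (c * β * h (β * u)) (c * β * h (β * (u - t))) :=
    intervalIntegral.integral_Iic_add_Ioi hmax.integrableOn hmax.integrableOn
  have hcβ : 0 ≤ c * β := by positivity
  have hleft : (∫ u in Set.Iic (t / 2), max (c * β * h (β * u)) (c * β * h (β * (u - t))))
      = ∫ u in Set.Iic (t / 2), c * β * h (β * u) := by
    apply setIntegral_congr_fun measurableSet_Iic
    intro u hu
    simp only [Set.mem_Iic] at hu
    apply max_eq_left
    apply mul_le_mul_of_nonneg_left _ hcβ
    apply h_mono
    have h0 : (0:ℝ) ≤ t - 2 * u := by linarith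
    nlinarith [mul_nonneg (mul_nonneg (sq_nonneg β) ht.le) h0]
  have hright : (∫ u in Set.Ioi (t / 2), max (c * β * h (β * u)) (c * β * h (β * (u - t))))
      = ∫ u in Set.Ioi (t / 2), c * β * h (β * (u - t)) := by
    apply setIntegral_congr_fun measurableSet_Ioi
    intro u hu
    simp only [Set.mem_Ioi] at hu
    apply max_eq_right
    apply mul_le_mul_of_nonneg_left _ hcβ
    apply h_mono
    have h0 : (0:ℝ) ≤ 2 * u - t := by linarith
    nlinarith [mul_nonneg (mul_nonneg (sq_nonneg β) ht.le) h0]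
  set T : ℝ := ∫ s in Set.Iic (β * t / 2), h s with hT_def
  have h_even : ∀ x : ℝ, h (-x) = h x := by
    intro x; rw [hh_def]; simp [neg_sq]
  -- left piece
  have hA : (∫ u in Set.Iic (t / 2), c * β * h (β * u)) = c * T := by
    rw [integral_const_mul]
    have e1 : (∫ u in Set.Iic (t / 2), h (β * u))
        = ∫ x in Set.Ioi (-(t / 2)), h (β * x) := by
      rw [← integral_comp_neg_Iic (t / 2) (fun x => h (β * x))]
      apply setIntegral_congr_fun measurableSet_Iic
      intro x _
      show h (β * x) = h (β * -x)
      rw [show β * -x = -(β * x) by ring, h_even]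
    have e2 : (∫ x in Set.Ioi (-(t / 2)), h (β * x))
        = β⁻¹ • ∫ x in Set.Ioi (β * -(t / 2)), h x :=
      integral_comp_mul_left_Ioi h (-(t / 2)) hβ
    have e3 : (∫ x in Set.Ioi (β * -(t / 2)), h x) = T := by
      rw [show β * -(t / 2) = -(β * t / 2) by ring, hT_def,
        ← integral_comp_neg_Iic (β * t / 2) h]
      apply setIntegral_congr_fun measurableSet_Iic
      intro x _
      exact h_even x
    rw [e1, e2, e3, smul_eq_mul]
    field_simp
  -- right piece
  have hB : (∫ u in Set.Ioi (t / 2), c * β * h (β * (u - t))) = c * T := by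
    rw [integral_const_mul]
    have e1 : (∫ u in Set.Ioi (t / 2), h (β * (u - t)))
        = β⁻¹ • ∫ x in Set.Ioi (β * (t / 2)), h (x - β * t) := by
      rw [← integral_comp_mul_left_Ioi (fun x => h (x - β * t)) (t / 2) hβ]
      apply setIntegral_congr_fun measurableSet_Ioi
      intro x _
      show h (β * (x - t)) = h (β * x - β * t)
      rw [show β * x - β * t = β * (x - t) by ring]
    have e2 : (∫ x in Set.Ioi (β * (t / 2)), h (x - β * t))
        = ∫ y in Set.Iic (-(β * (t / 2))), h (-y - β * t) := by
      rw [← integral_comp_neg_Ioi (β * (t / 2)) (fun y => h (-y - β * t))]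
      apply setIntegral_congr_fun measurableSet_Ioi
      intro x _
      show h (x - β * t) = h (- -x - β * t)
      rw [neg_neg]
    have e3 : (∫ y in Set.Iic (-(β * (t / 2))), h (-y - β * t)) = T := by
      have e4 : (∫ y in Set.Iic (-(β * (t / 2))), h (-y - β * t))
          = ∫ y in Set.Iic (-(β * (t / 2))), h (y - -(β * t)) := by
        apply setIntegral_congr_fun measurableSet_Iic
        intro y _
        show h (-y - β * t) = h (y - -(β * t))
        rw [show y - -(β * t) = -(-y - β * t) by ring, h_even]
      rw [e4, integral_Iic_comp_sub h (-(β * (t / 2))) (-(β * t)), hT_def]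
      congr 1
      ring_nf
    rw [e1, e2, e3, smul_eq_mul]
    field_simp
  rw [← hsplit, hleft, hright, hA, hB]
  field_simp
  ring
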